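/- Let p > 1, and for τ ∈ (0,1) define g(τ) = (1 - τ^{1-p})/(1 - τ). Then for every A > 0 and every τ ∈ (0,1), one has (1-τ)^p · (g(τ) + A) ≤ (A - (p-1)) · (log(1/τ))^p. -/

import Mathlib

theorem stmt_4 (p : ℝ) (hp : 1 < p) (A : ℝ) (hA : 0 < A)
    (τ : ℝ) (hτ : τ ∈ Set.Ioo (0:ℝ) 1) :
    (1 - τ) ^ p * ((1 - τ ^ (1 - p)) / (1 - τ) + A)
      ≤ (A - (p - 1)) * (Real.log (1 / τ)) ^ p := by
  obtain ⟨hτ0, hτ1⟩ := hτ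
  set L : ℝ := -Real.log τ with hLdef
  have hL0 : 0 < L := by
    have := Real.log_neg hτ0 hτ1
    simp [hLdef]; linarith
  have hq : 0 < p - 1 := by linarith
  have h1τ : 0 < 1 - τ := by linarith
  -- sinh inequality
  have sinh : ∀ y : ℝ, 0 < y → 2 * y ≤ Real.exp y - Real.exp (-y) := by
    intro y hy
    have h := (Real.self_lt_sinh_iff.mpr hy).le
    rw [Real.sinh_eq] at h
    linarith
  have hτexp : τ = Real.exp (-L) := by
    rw [hLdef, neg_neg, Real.exp_log hτ0]
  -- Fact A : L * exp(-(L/2)) ≤ 1 - τ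
  have factA : L * Real.exp (-(L / 2)) ≤ 1 - τ := by
    have h := sinh (L / 2) (by linarith)
    have he : Real.exp (L / 2) * Real.exp (-(L / 2)) = 1 := by
      rw [← Real.exp_add]; norm_num
    have he2 : Real.exp (-(L / 2)) * Real.exp (-(L / 2)) = Real.exp (-L) := by
      rw [← Real.exp_add]; ring_nf
    have hpos := Real.exp_pos (-(L / 2))
    rw [hτexp]
    nlinarith [mul_le_mul_of_nonneg_right h hpos.le]
  have hfA0 : 0 < L * Real.exp (-(L / 2)) := by positivity
  -- τ^(1-p) = exp((p-1)*L)
  have hτ1p : τ ^ (1 - p) = Real.exp ((p - 1) * L) := by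
    rw [Real.rpow_def_of_pos hτ0]
    congr 1
    have : Real.log τ = -L := by rw [hLdef]; ring
    rw [this]; ring
  -- Fact B : (p-1)*L*exp((p-1)*L/2) ≤ τ^(1-p) - 1
  have factB : (p - 1) * L * Real.exp ((p - 1) * L / 2) ≤ τ ^ (1 - p) - 1 := by
    have h := sinh ((p - 1) * L / 2) (by positivity)
    have he : Real.exp ((p - 1) * L / 2) * Real.exp ((p - 1) * L / 2)
        = Real.exp ((p - 1) * L) := by
      rw [← Real.exp_add]; ring_nf
    have hpos := Real.exp_pos ((p - 1) * L / 2)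
    have he2 : Real.exp (-((p - 1) * L / 2)) * Real.exp ((p - 1) * L / 2) = 1 := by
      rw [← Real.exp_add]; norm_num
    rw [hτ1p]
    nlinarith [mul_le_mul_of_nonneg_right h hpos.le]
  -- power of Fact A
  have powA : L ^ (p - 1) * Real.exp (-((p - 1) * L / 2)) ≤ (1 - τ) ^ (p - 1) := by
    have h := Real.rpow_le_rpow hfA0.le factA (by linarith : (0:ℝ) ≤ p - 1)
    calc L ^ (p - 1) * Real.exp (-((p - 1) * L / 2))
        = (L * Real.exp (-(L / 2))) ^ (p - 1) := by
          rw [Real.mul_rpow hL0.le (Real.exp_pos _).le,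
            Real.rpow_def_of_pos (Real.exp_pos _), Real.log_exp]
          ring_nf
      _ ≤ (1 - τ) ^ (p - 1) := h
  -- main product inequality
  have main : (p - 1) * L ^ p ≤ (1 - τ) ^ (p - 1) * (τ ^ (1 - p) - 1) := by
    have hB0 : 0 ≤ (p - 1) * L * Real.exp ((p - 1) * L / 2) := by positivity
    have hprod : (L ^ (p - 1) * Real.exp (-((p - 1) * L / 2))) *
        ((p - 1) * L * Real.exp ((p - 1) * L / 2))
        ≤ (1 - τ) ^ (p - 1) * (τ ^ (1 - p) - 1) := by
      apply mul_le_mul powA factB hB0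
      positivity
    have hexp1 : Real.exp (-((p - 1) * L / 2)) * Real.exp ((p - 1) * L / 2) = 1 := by
      rw [← Real.exp_add]; norm_num
    have hLp : L ^ (p - 1) * L = L ^ p := by
      rw [← Real.rpow_add_one (ne_of_gt hL0)]; ring_nf
    calc (p - 1) * L ^ p = (L ^ (p - 1) * Real.exp (-((p - 1) * L / 2))) *
        ((p - 1) * L * Real.exp ((p - 1) * L / 2)) := by
          rw [← hLp]; linear_combination (-(p - 1) * L * L ^ (p - 1)) * hexp1
      _ ≤ _ := hprod
  -- A part : (1-τ)^p ≤ L^p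
  have h1τL : 1 - τ ≤ L := by
    have := Real.log_le_sub_one_of_pos hτ0
    rw [hLdef]; linarith
  have powp : (1 - τ) ^ p ≤ L ^ p :=
    Real.rpow_le_rpow h1τ.le h1τL (by linarith)
  -- rewrite the goal
  have hlog : Real.log (1 / τ) = L := by
    rw [one_div, Real.log_inv, hLdef]
  have hfac : (1 - τ) ^ p = (1 - τ) ^ (p - 1) * (1 - τ) := by
    rw [← Real.rpow_add_one (ne_of_gt h1τ)]; ring_nf
  rw [hlog]
  have hLHS : (1 - τ) ^ p * ((1 - τ ^ (1 - p)) / (1 - τ) + A)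
      = (1 - τ) ^ (p - 1) * (1 - τ ^ (1 - p)) + A * (1 - τ) ^ p := by
    rw [hfac]; field_simp
  rw [hLHS]
  have hAle : A * (1 - τ) ^ p ≤ A * L ^ p :=
    mul_le_mul_of_nonneg_left powp hA.le
  nlinarith [main, hAle]
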